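/- Suppose m = n. Assume the initial vector satisfies 0 < x̄(0) − x_1(0) ≤ η and, for every j ∈ {2,…,n}, |x_j(0) − x̄(0)| ≥ η + (x̄(0) − x_1(0))/(n−1). Then x_j(t) = x_j(0) for every j ≠ 1 and every t ≥ 0, and lim_{t→∞} x_1(t) = (1/(n−1)) ∑_{j=2}^n x_j(0). -/

import Mathlib

open Filter MeasureTheory

/-- Average of a vector of `n` opinions. -/
noncomputable def cliqueAvg (n : ℕ) (x : Fin n → ℝ) : ℝ := (∑ j, x j) / (n : ℝ)

/-- Full-clique (`m = n`) bounded-confidence opinion dynamics with mixing parameter `δ`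
and confidence level `η`, started from `x0`. -/
noncomputable def fcTraj (n : ℕ) (δ η : ℝ) (x0 : Fin n → ℝ) : ℕ → Fin n → ℝ
  | 0 => x0
  | t + 1 => fun i =>
      if |fcTraj n δ η x0 t i - cliqueAvg n (fcTraj n δ η x0 t)| ≤ η then
        (1 - δ) * fcTraj n δ η x0 t i + δ * cliqueAvg n (fcTraj n δ η x0 t)
      else fcTraj n δ η x0 t i

set_option maxHeartbeats 1000000 in
theorem fc_aux (n : ℕ) (hn : 2 ≤ n) (δ η : ℝ) (hδ0 : 0 < δ) (hδ1 : δ < 1) (hη0 : 0 < η)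
    (x0 : Fin n → ℝ) (i0 : Fin n)
    (h1 : 0 < cliqueAvg n x0 - x0 i0)
    (h2 : cliqueAvg n x0 - x0 i0 ≤ η)
    (h3 : ∀ j : Fin n, j ≠ i0 →
      η + (cliqueAvg n x0 - x0 i0) / ((n : ℝ) - 1) ≤ |x0 j - cliqueAvg n x0|) :
    (∀ j : Fin n, j ≠ i0 → ∀ t : ℕ, fcTraj n δ η x0 t j = x0 j) ∧
    Tendsto (fun t => fcTraj n δ η x0 t i0) atTop
      (nhds ((∑ j ∈ Finset.univ.erase i0, x0 j) / ((n : ℝ) - 1))) := by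
  have hnR : (2:ℝ) ≤ (n:ℝ) := by exact_mod_cast hn
  have hn0 : (0:ℝ) < n := by linarith
  have hn1 : (0:ℝ) < (n:ℝ) - 1 := by linarith
  set S : ℝ := ∑ j ∈ Finset.univ.erase i0, x0 j with hS
  set a0 : ℝ := x0 i0 with ha0
  set L : ℝ := S / ((n:ℝ) - 1) with hL
  set d : ℝ := cliqueAvg n x0 - a0 with hd
  set c : ℝ := 1 - δ * ((n:ℝ)-1) / n with hc
  have hsum : ∑ j, x0 j = a0 + S := (Finset.add_sum_erase _ x0 (Finset.mem_univ i0)).symm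
  have havg : cliqueAvg n x0 = (a0 + S) / n := by rw [cliqueAvg, hsum]
  have hSL : S = ((n:ℝ)-1) * L := by rw [hL]; field_simp
  have hdL : d = ((n:ℝ)-1)/n * (L - a0) := by
    rw [hd, havg, hSL]; field_simp; ring
  have hq : (0:ℝ) < ((n:ℝ)-1)/n := by positivity
  have hLa0 : 0 < L - a0 := by
    by_contra h
    push_neg at h
    have h1' := h1
    rw [hdL] at h1'
    nlinarith [mul_nonpos_of_nonneg_of_nonpos hq.le h]
  have hc0 : 0 < c := by
    rw [hc]
    have : δ * ((n:ℝ)-1)/n < 1 := by rw [div_lt_one hn0]; nlinarith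
    linarith
  have hc1 : c < 1 := by
    rw [hc]
    have : 0 < δ * ((n:ℝ)-1)/n := by positivity
    linarith
  have key : ∀ t : ℕ, (∀ j : Fin n, j ≠ i0 → fcTraj n δ η x0 t j = x0 j) ∧
      fcTraj n δ η x0 t i0 = L - c ^ t * (L - a0) := by
    intro t
    induction t with
    | zero => exact ⟨fun j _ => rfl, by simp [fcTraj]; rfl⟩
    | succ t ih =>
      obtain ⟨ihj, ihi⟩ := ih
      have hct0 : 0 < c ^ t := pow_pos hc0 t
      have hct1 : c ^ t ≤ 1 := pow_le_one₀ hc0.le hc1.le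
      set a : ℝ := L - c ^ t * (L - a0) with ha
      have hsumt : ∑ j, fcTraj n δ η x0 t j = a + S := by
        rw [← Finset.add_sum_erase _ _ (Finset.mem_univ i0), ihi]
        congr 1
        exact Finset.sum_congr rfl fun j hj => ihj j (Finset.ne_of_mem_erase hj)
      have havgt : cliqueAvg n (fcTraj n δ η x0 t) = (a + S) / n := by
        rw [cliqueAvg, hsumt]
      have hgap : cliqueAvg n (fcTraj n δ η x0 t) - a = ((n:ℝ)-1)/n * (c ^ t * (L - a0)) := by
        rw [havgt, hSL, ha]; field_simp; ring
      have hgap0 : 0 ≤ cliqueAvg n (fcTraj n δ η x0 t) - a := by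
        rw [hgap]; positivity
      have hle : c ^ t * (L - a0) ≤ L - a0 := by nlinarith [mul_nonneg (by linarith : (0:ℝ) ≤ 1 - c ^ t) hLa0.le]
      have hgapd : cliqueAvg n (fcTraj n δ η x0 t) - a ≤ d := by
        rw [hgap, hdL]
        exact mul_le_mul_of_nonneg_left hle hq.le
      have hcondi : |a - cliqueAvg n (fcTraj n δ η x0 t)| ≤ η := by
        rw [abs_sub_comm, abs_of_nonneg hgap0]; linarith
      -- average drift bound
      have hda : a - a0 < L - a0 := by
        have := mul_pos hct0 hLa0
        rw [ha]; linarith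
      have hda0 : 0 ≤ a - a0 := by rw [ha]; linarith
      have hdrift : cliqueAvg n (fcTraj n δ η x0 t) - cliqueAvg n x0 < d / ((n:ℝ)-1) := by
        have hdd : d / ((n:ℝ)-1) = (L - a0) / n := by
          rw [hdL]; field_simp
        rw [havgt, havg, hdd]
        have he : (a + S)/n - (a0 + S)/n = (a - a0)/n := by ring
        rw [he]
        gcongr
      have hdrift0 : 0 ≤ cliqueAvg n (fcTraj n δ η x0 t) - cliqueAvg n x0 := by
        rw [havgt, havg]
        have he : (a + S)/n - (a0 + S)/n = (a - a0)/n := by ring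
        rw [he]; positivity
      have hcondj : ∀ j : Fin n, j ≠ i0 →
          ¬ (|x0 j - cliqueAvg n (fcTraj n δ η x0 t)| ≤ η) := by
        intro j hj
        have htri := abs_sub_le (x0 j) (cliqueAvg n (fcTraj n δ η x0 t)) (cliqueAvg n x0)
        have h3j := h3 j hj
        have habs : |cliqueAvg n (fcTraj n δ η x0 t) - cliqueAvg n x0| < d / ((n:ℝ)-1) := by
          rw [abs_of_nonneg hdrift0]; exact hdrift
        push_neg
        calc η = (η + d / ((n:ℝ)-1)) - d / ((n:ℝ)-1) := by ring
        _ < |x0 j - cliqueAvg n x0| - |cliqueAvg n (fcTraj n δ η x0 t) - cliqueAvg n x0| := by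
            linarith
        _ ≤ |x0 j - cliqueAvg n (fcTraj n δ η x0 t)| := by linarith
      constructor
      · intro j hj
        simp only [fcTraj]
        rw [ihj j hj, if_neg (hcondj j hj)]
      · simp only [fcTraj]
        rw [ihi, if_pos hcondi, havgt, ha, hSL, pow_succ, hc]
        field_simp
        ring
  refine ⟨fun j hj t => (key t).1 j hj, ?_⟩
  have hlim : Tendsto (fun t : ℕ => L - c ^ t * (L - a0)) atTop (nhds L) := by
    have hpow : Tendsto (fun t : ℕ => c ^ t) atTop (nhds 0) :=
      tendsto_pow_atTop_nhds_zero_of_lt_one hc0.le hc1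
    have := Filter.Tendsto.const_sub L (hpow.mul_const (L - a0))
    simpa using this

  exact hlim.congr fun t => ((key t).2).symm

theorem stmt7 (n : ℕ) (hn : 2 ≤ n) (δ η : ℝ) (hδ0 : 0 < δ) (hδ1 : δ < 1) (hη0 : 0 < η)
    (x0 : Fin n → ℝ)
    (h1 : 0 < cliqueAvg n x0 - x0 ⟨0, by omega⟩)
    (h2 : cliqueAvg n x0 - x0 ⟨0, by omega⟩ ≤ η)
    (h3 : ∀ j : Fin n, j ≠ ⟨0, by omega⟩ →
      η + (cliqueAvg n x0 - x0 ⟨0, by omega⟩) / ((n : ℝ) - 1) ≤ |x0 j - cliqueAvg n x0|) :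
    (∀ j : Fin n, j ≠ ⟨0, by omega⟩ → ∀ t : ℕ, fcTraj n δ η x0 t j = x0 j) ∧
    Tendsto (fun t => fcTraj n δ η x0 t ⟨0, by omega⟩) atTop
      (nhds ((∑ j ∈ Finset.univ.erase (⟨0, by omega⟩ : Fin n), x0 j) / ((n : ℝ) - 1))) :=
  fc_aux n hn δ η hδ0 hδ1 hη0 x0 ⟨0, by omega⟩ h1 h2 h3
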